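/- Let Φ be a Young function. Then for every t > 0: sup_{s > 0} (s/Φ⁻¹(s))·e^{−st/2} ≤ 2 / (t·Φ⁻¹(1/t)). -/

import Mathlib

open MeasureTheory Set Filter Topology ENNReal

noncomputable section

/-- A Young function on `(0,∞)`. -/
def IsYoungFunction (Φ : ℝ → ℝ) : Prop :=
  StrictMonoOn Φ (Set.Ioi 0) ∧ ContinuousOn Φ (Set.Ioi 0) ∧
  ConvexOn ℝ (Set.Ioi 0) Φ ∧ (∀ t : ℝ, 0 < t → 0 < Φ t) ∧
  Filter.Tendsto (fun t => Φ t / t) (nhdsWithin 0 (Set.Ioi 0)) (nhds 0) ∧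
  Filter.Tendsto (fun t => Φ t / t) Filter.atTop Filter.atTop

lemma young_tendsto_zero {Φ : ℝ → ℝ} (hΦ : IsYoungFunction Φ) :
    Filter.Tendsto Φ (nhdsWithin 0 (Set.Ioi 0)) (nhds 0) := by
  have h := hΦ.2.2.2.2.1
  have ht : Filter.Tendsto (fun t : ℝ => t) (nhdsWithin 0 (Set.Ioi 0)) (nhds 0) :=
    tendsto_id.mono_left nhdsWithin_le_nhds
  have h2 : Filter.Tendsto (fun t => (Φ t / t) * t) (nhdsWithin 0 (Set.Ioi 0)) (nhds 0) := by
    simpa using h.mul ht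
  refine h2.congr' ?_
  filter_upwards [self_mem_nhdsWithin] with t htt
  have : (t : ℝ) ≠ 0 := ne_of_gt htt
  field_simp

lemma young_slope {Φ : ℝ → ℝ} (hΦ : IsYoungFunction Φ) {u v : ℝ} (hu : 0 < u) (huv : u ≤ v) :
    Φ u * v ≤ Φ v * u := by
  rcases eq_or_lt_of_le huv with rfl | hlt
  · exact le_rfl
  have hv : 0 < v := hu.trans hlt
  have key : ∀ ε ∈ Set.Ioo (0:ℝ) u,
      Φ u ≤ (v-u)/(v-ε) * Φ ε + (u-ε)/(v-ε) * Φ v := by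
    intro ε hε
    have hεv : ε < v := hε.2.trans hlt
    have hd : 0 < v - ε := by linarith
    have hc := hΦ.2.2.1.2 (Set.mem_Ioi.mpr hε.1) (Set.mem_Ioi.mpr hv)
      (show (0:ℝ) ≤ (v-u)/(v-ε) from div_nonneg (by linarith [hε.1, hε.2]) hd.le)
      (show (0:ℝ) ≤ (u-ε)/(v-ε) from div_nonneg (by linarith [hε.1, hε.2]) hd.le)
      (show (v-u)/(v-ε) + (u-ε)/(v-ε) = 1 by
        rw [← add_div, div_eq_one_iff_eq hd.ne']; ring)
    have harg : ((v-u)/(v-ε)) • ε + ((u-ε)/(v-ε)) • v = u := by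
      simp only [smul_eq_mul]
      field_simp
      ring
    rw [harg] at hc
    simpa [smul_eq_mul] using hc
  have hev : ∀ᶠ ε in nhdsWithin 0 (Set.Ioi 0),
      Φ u ≤ (v-u)/(v-ε) * Φ ε + (u-ε)/(v-ε) * Φ v := by
    filter_upwards [Ioo_mem_nhdsGT_of_mem (Set.left_mem_Ico.mpr hu)] with ε hε
    exact key ε hε
  have hlim : Filter.Tendsto (fun ε => (v-u)/(v-ε) * Φ ε + (u-ε)/(v-ε) * Φ v)
      (nhdsWithin 0 (Set.Ioi 0)) (nhds ((v-u)/v * 0 + u/v * Φ v)) := by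
    have htends : Filter.Tendsto (fun ε : ℝ => ε) (nhdsWithin 0 (Set.Ioi 0)) (nhds 0) :=
      tendsto_id.mono_left nhdsWithin_le_nhds
    have h1 : Filter.Tendsto (fun ε : ℝ => (v-u)/(v-ε)) (nhdsWithin 0 (Set.Ioi 0))
        (nhds ((v-u)/v)) := by
      have : Filter.Tendsto (fun ε : ℝ => v - ε) (nhdsWithin 0 (Set.Ioi 0)) (nhds v) := by
        simpa using tendsto_const_nhds.sub htends
      exact tendsto_const_nhds.div this (ne_of_gt hv)
    have h2 : Filter.Tendsto (fun ε : ℝ => (u-ε)/(v-ε)) (nhdsWithin 0 (Set.Ioi 0))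
        (nhds (u/v)) := by
      have hnum : Filter.Tendsto (fun ε : ℝ => u - ε) (nhdsWithin 0 (Set.Ioi 0)) (nhds u) := by
        simpa using tendsto_const_nhds.sub htends
      have hden : Filter.Tendsto (fun ε : ℝ => v - ε) (nhdsWithin 0 (Set.Ioi 0)) (nhds v) := by
        simpa using tendsto_const_nhds.sub htends
      exact hnum.div hden (ne_of_gt hv)
    exact (h1.mul (young_tendsto_zero hΦ)).add (h2.mul tendsto_const_nhds)
  have hfin : Φ u ≤ (v-u)/v * 0 + u/v * Φ v := ge_of_tendsto hlim hev
  have : Φ u ≤ u/v * Φ v := by linarith [hfin]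
  rw [div_mul_eq_mul_div, le_div_iff₀ hv] at this
  linarith

/-- for a Young function `Φ` and every `t > 0`,
`sup_{s>0} (s/Φ⁻¹(s))·e^{−st/2} ≤ 2/(t·Φ⁻¹(1/t))`, stated as the corresponding
pointwise upper bound for all `s > 0`. -/
theorem sup_div_inv_mul_exp_bound
    (Φ Φinv : ℝ → ℝ) (hΦ : IsYoungFunction Φ)
    (hΦinvpos : ∀ s : ℝ, 0 < s → 0 < Φinv s)
    (hΦinv1 : ∀ t : ℝ, 0 < t → Φinv (Φ t) = t)
    (hΦinv2 : ∀ s : ℝ, 0 < s → Φ (Φinv s) = s) :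
    ∀ t : ℝ, 0 < t → ∀ s : ℝ, 0 < s →
      (s / Φinv s) * Real.exp (-(s * t / 2)) ≤ 2 / (t * Φinv (1/t)) := by
  -- monotonicity of Φinv
  have hmono : ∀ a b : ℝ, 0 < a → a ≤ b → Φinv a ≤ Φinv b := by
    intro a b ha hab
    by_contra h
    push_neg at h
    have hb : 0 < b := ha.trans_le hab
    have := hΦ.1 (Set.mem_Ioi.mpr (hΦinvpos b hb)) (Set.mem_Ioi.mpr (hΦinvpos a ha)) h
    rw [hΦinv2 a ha, hΦinv2 b hb] at this
    linarith
  -- monotonicity of s ↦ s / Φinv s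
  have hratio : ∀ a b : ℝ, 0 < a → a ≤ b → a / Φinv a ≤ b / Φinv b := by
    intro a b ha hab
    have hb : 0 < b := ha.trans_le hab
    have hu : 0 < Φinv a := hΦinvpos a ha
    have hv : 0 < Φinv b := hΦinvpos b hb
    have huv : Φinv a ≤ Φinv b := hmono a b ha hab
    have := young_slope hΦ hu huv
    rw [hΦinv2 a ha, hΦinv2 b hb] at this
    rw [div_le_div_iff₀ hu hv]
    linarith
  intro t ht s hs
  have hinvt : 0 < Φinv (1/t) := hΦinvpos _ (by positivity)
  rcases le_or_gt (s * t) 2 with hcase | hcase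
  · -- s ≤ 2/t : exp ≤ 1 and ratio monotone
    have hexp : Real.exp (-(s * t / 2)) ≤ 1 := by
      rw [Real.exp_le_one_iff]
      nlinarith
    have hs2t : s ≤ 2 / t := by rw [le_div_iff₀ ht]; linarith
    have h1 : s / Φinv s ≤ (2/t) / Φinv (2/t) := hratio s (2/t) hs hs2t
    have h2 : Φinv (1/t) ≤ Φinv (2/t) := by
      apply hmono _ _ (by positivity)
      gcongr
      norm_num
    have h3 : (2/t) / Φinv (2/t) ≤ (2/t) / Φinv (1/t) := by
      apply div_le_div_of_nonneg_left (by positivity) hinvt h2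
    have h4 : (2/t) / Φinv (1/t) = 2 / (t * Φinv (1/t)) := by
      field_simp
    have hΦspos : 0 < Φinv s := hΦinvpos s hs
    have hpos : 0 ≤ s / Φinv s := le_of_lt (by positivity)
    calc (s / Φinv s) * Real.exp (-(s * t / 2)) ≤ (s / Φinv s) * 1 :=
          mul_le_mul_of_nonneg_left hexp hpos
      _ = s / Φinv s := mul_one _
      _ ≤ (2/t) / Φinv (2/t) := h1
      _ ≤ (2/t) / Φinv (1/t) := h3
      _ = 2 / (t * Φinv (1/t)) := h4
  · -- s * t > 2 : use exp(-x) ≤ 1/x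
    have hst : 0 < s * t := by positivity
    have hexp : Real.exp (-(s * t / 2)) ≤ 2 / (s * t) := by
      have h0 : 0 < s * t / 2 := by positivity
      have hx : s * t / 2 ≤ Real.exp (s * t / 2) := by
        linarith [Real.add_one_le_exp (s * t / 2)]
      have hinv : (Real.exp (s * t / 2))⁻¹ ≤ (s * t / 2)⁻¹ := by
        apply inv_anti₀ h0 hx
      rw [Real.exp_neg]
      calc (Real.exp (s * t / 2))⁻¹ ≤ (s * t / 2)⁻¹ := hinv
        _ = 2 / (s * t) := by rw [inv_div]
    have hΦs : Φinv (1/t) ≤ Φinv s := by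
      apply hmono _ _ (by positivity)
      rw [div_le_iff₀ ht]
      nlinarith
    have hΦspos : 0 < Φinv s := hΦinvpos s hs
    calc (s / Φinv s) * Real.exp (-(s * t / 2)) ≤ (s / Φinv s) * (2 / (s * t)) :=
          mul_le_mul_of_nonneg_left hexp (le_of_lt (by positivity))
      _ = 2 / (t * Φinv s) := by field_simp
      _ ≤ 2 / (t * Φinv (1/t)) := by
          apply div_le_div_of_nonneg_left (by norm_num) (by positivity)
          exact mul_le_mul_of_nonneg_left hΦs (le_of_lt ht)
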